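/- The representation of the 4-star quiver (central node with arrows to four outer nodes) with central space K^{2m}, outer spaces K^m, and maps [I 0], [0 I], [I I], and [I J_m(0)] (where J_m(0) is the nilpotent m×m Jordan block) is indecomposable for every m ≥ 1. -/

import Mathlib

/-- The representation of the 4-star quiver with central space `K^{2m}`, outer
spaces `K^m`, and maps `[I 0]`, `[0 I]`, `[I I]` and `[I J_m(0)]` (where
`J_m(0)` is the nilpotent `m × m` Jordan block) is indecomposable for every
`m ≥ 1`: for any complementary pair of families of subspaces preserved by the
four maps, one of the families is identically zero. -/
theorem stmt_18 (K : Type*) [Field K] (m : ℕ) (hm : 1 ≤ m)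
    (J : (Fin m → K) →ₗ[K] (Fin m → K))
    (hJ : J = Matrix.mulVecLin
      (Matrix.of fun i j : Fin m => if (j : ℕ) = (i : ℕ) + 1 then (1 : K) else 0))
    (f1 f2 f3 f4 : ((Fin m → K) × (Fin m → K)) →ₗ[K] (Fin m → K))
    (h1 : f1 = LinearMap.fst K (Fin m → K) (Fin m → K))
    (h2 : f2 = LinearMap.snd K (Fin m → K) (Fin m → K))
    (h3 : f3 = LinearMap.fst K (Fin m → K) (Fin m → K) +
      LinearMap.snd K (Fin m → K) (Fin m → K))
    (h4 : f4 = LinearMap.fst K (Fin m → K) (Fin m → K) +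
      J ∘ₗ LinearMap.snd K (Fin m → K) (Fin m → K)) :
    ∀ (Uc Wc : Submodule K ((Fin m → K) × (Fin m → K)))
      (U1 W1 U2 W2 U3 W3 U4 W4 : Submodule K (Fin m → K)),
      IsCompl Uc Wc → IsCompl U1 W1 → IsCompl U2 W2 → IsCompl U3 W3 →
      IsCompl U4 W4 →
      Uc.map f1 ≤ U1 → Wc.map f1 ≤ W1 →
      Uc.map f2 ≤ U2 → Wc.map f2 ≤ W2 →
      Uc.map f3 ≤ U3 → Wc.map f3 ≤ W3 →
      Uc.map f4 ≤ U4 → Wc.map f4 ≤ W4 →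
      (Uc = ⊥ ∧ U1 = ⊥ ∧ U2 = ⊥ ∧ U3 = ⊥ ∧ U4 = ⊥) ∨
      (Wc = ⊥ ∧ W1 = ⊥ ∧ W2 = ⊥ ∧ W3 = ⊥ ∧ W4 = ⊥) := by
  intro Uc Wc U1 W1 U2 W2 U3 W3 U4 W4 hc hc1 hc2 hc3 hc4
    hu1 hw1 hu2 hw2 hu3 hw3 hu4 hw4
  -- basic J facts
  have hJapp : ∀ (z : Fin m → K) (i : Fin m),
      J z i = if h : (i : ℕ) + 1 < m then z ⟨(i : ℕ) + 1, h⟩ else 0 := by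
    intro z i
    subst hJ
    simp only [Matrix.mulVecLin_apply, Matrix.mulVec, dotProduct, Matrix.of_apply,
      ite_mul, one_mul, zero_mul]
    split
    · rename_i h
      rw [Finset.sum_eq_single (⟨(i:ℕ)+1, h⟩ : Fin m)]
      · simp
      · intro b _ hb
        rw [if_neg]
        intro hb'
        exact hb (Fin.ext hb')
      · intro h'; exact absurd (Finset.mem_univ _) h'
    · rename_i h
      apply Finset.sum_eq_zero
      intro b _
      rw [if_neg]
      intro hb
      exact h (hb ▸ b.isLt)
  have hJpow : ∀ (k : ℕ) (z : Fin m → K) (i : Fin m), m ≤ (i : ℕ) + k → (J ^ k) z i = 0 := by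
    intro k
    induction k with
    | zero =>
      intro z i hi
      have := i.isLt; omega
    | succ k ih =>
      intro z i hi
      rw [pow_succ', Module.End.mul_apply, hJapp]
      split
      · rename_i h
        have hle : m ≤ ((⟨(i:ℕ)+1, h⟩ : Fin m) : ℕ) + k := by
          simp only [Fin.val_mk]; omega
        exact ih z _ hle
      · rfl
  have hJm : ∀ z : Fin m → K, (J ^ m) z = 0 := by
    intro z; funext i; exact hJpow m z i (Nat.le_add_left m i)
  -- the distinguished basis vector e₀
  set i0 : Fin m := ⟨0, hm⟩ with hi0
  set e0 : Fin m → K := Pi.single i0 (1 : K) with he0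
  have hJe0 : J e0 = 0 := by
    funext i
    rw [hJapp]
    split
    · rename_i h
      rw [he0]
      exact Pi.single_eq_of_ne (by intro hh; simpa using congrArg Fin.val hh) _
    · rfl
  have hkerJ : ∀ z : Fin m → K, J z = 0 → z = z i0 • e0 := by
    intro z hz
    funext j
    by_cases hj : j = i0
    · subst hj; rw [Pi.smul_apply, he0, Pi.single_eq_same, smul_eq_mul, mul_one]
    · have hj' : 0 < (j : ℕ) :=
        Nat.pos_of_ne_zero (fun h => hj (Fin.ext (by simp [hi0, h])))
      have hjm := j.isLt
      have hlt : (j : ℕ) - 1 < m := by omega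
      have hlt2 : ((⟨(j : ℕ) - 1, hlt⟩ : Fin m) : ℕ) + 1 < m := by
        simp only [Fin.val_mk]; omega
      have hz1 := congrFun hz ⟨(j : ℕ) - 1, hlt⟩
      rw [hJapp, dif_pos hlt2] at hz1
      have hzz : z j = 0 := by
        have hje : (⟨((⟨(j:ℕ) - 1, hlt⟩ : Fin m) : ℕ) + 1, hlt2⟩ : Fin m) = j :=
          Fin.ext (by simp only [Fin.val_mk]; omega)
        rw [← hje]
        simpa using hz1
      have hrhs : (z i0 • e0) j = 0 := by
        rw [Pi.smul_apply, he0, Pi.single_eq_of_ne hj, smul_zero]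
      rw [hzz, hrhs]
  -- the projection e onto Uc along Wc
  set e : ((Fin m → K) × (Fin m → K)) →ₗ[K] ((Fin m → K) × (Fin m → K)) :=
    Uc.subtype ∘ₗ Uc.projectionOnto Wc hc with he
  have heU : ∀ v, e v ∈ Uc := fun v => (Uc.projectionOnto Wc hc v).2
  have heW : ∀ v, v - e v ∈ Wc := by
    intro v
    have h := Submodule.projection_add_projection_eq_self hc v
    have hv : v - e v = ((Wc.projectionOnto Uc hc.symm v : Wc) : (Fin m → K) × (Fin m → K)) :=
      sub_eq_iff_eq_add'.mpr h.symm
    rw [hv]; exact (Wc.projectionOnto Uc hc.symm v).2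
  have heUfix : ∀ v ∈ Uc, e v = v := by
    intro v hv
    rw [he]
    simp only [LinearMap.comp_apply, Submodule.subtype_apply]
    rw [show v = ((⟨v, hv⟩ : Uc) : (Fin m → K) × (Fin m → K)) from rfl,
      Submodule.projectionOnto_apply_left hc]
  have heWzero : ∀ v ∈ Wc, e v = 0 := by
    intro v hv
    rw [he]
    simp only [LinearMap.comp_apply, Submodule.subtype_apply]
    rw [Submodule.projectionOnto_apply_of_mem_right hc hv, Submodule.coe_zero]
  have heidem : ∀ v, e (e v) = e v := fun v => heUfix _ (heU v)
  -- e preserves kernels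
  have hker : ∀ (f : ((Fin m → K) × (Fin m → K)) →ₗ[K] (Fin m → K))
      (U W : Submodule K (Fin m → K)), IsCompl U W →
      Uc.map f ≤ U → Wc.map f ≤ W → ∀ v, f v = 0 → f (e v) = 0 := by
    intro f U W hUW hU hW v hv
    have ha : f (e v) ∈ U := hU ⟨e v, heU v, rfl⟩
    have hb : f (e v) ∈ W := by
      have hx : f (e v) = -(f (v - e v)) := by
        rw [map_sub, hv, zero_sub, neg_neg]
      rw [hx]
      exact neg_mem (hW ⟨v - e v, heW v, rfl⟩)
    exact (Submodule.disjoint_def.mp hUW.disjoint) _ ha hb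
  -- block structure of e
  set A : (Fin m → K) →ₗ[K] (Fin m → K) :=
    (LinearMap.fst K (Fin m → K) (Fin m → K)) ∘ₗ e ∘ₗ (LinearMap.inl K (Fin m → K) (Fin m → K))
    with hA
  have hAx : ∀ x, A x = (e (x, 0)).1 := fun x => rfl
  have hsnd0 : ∀ x : Fin m → K, (e (x, 0)).2 = 0 := by
    intro x
    have := hker f2 U2 W2 hc2 hu2 hw2 (x, 0) (by rw [h2]; rfl)
    rw [h2] at this; exact this
  have hfst0 : ∀ y : Fin m → K, (e (0, y)).1 = 0 := by
    intro y
    have := hker f1 U1 W1 hc1 hu1 hw1 (0, y) (by rw [h1]; rfl)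
    rw [h1] at this; exact this
  have hBA : ∀ x, (e (0, x)).2 = A x := by
    intro x
    have h30 : f3 (x, -x) = 0 := by rw [h3]; simp
    have hk := hker f3 U3 W3 hc3 hu3 hw3 (x, -x) h30
    rw [h3] at hk
    simp only [LinearMap.add_apply, LinearMap.fst_apply, LinearMap.snd_apply] at hk
    have hsplit : e (x, -x) = e (x, 0) + e (0, -x) := by
      rw [← map_add]; norm_num
    rw [hsplit] at hk
    simp only [Prod.fst_add, Prod.snd_add] at hk
    rw [hfst0, hsnd0] at hk
    have hneg : e ((0 : Fin m → K), -x) = -(e (0, x)) := by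
      rw [show ((0 : Fin m → K), -x) = -((0 : Fin m → K), x) by simp, map_neg]
    rw [hneg] at hk
    simp only [Prod.snd_neg, add_zero, zero_add] at hk
    rw [hAx]
    rw [add_neg_eq_zero] at hk
    exact hk.symm
  have heval : ∀ x y : Fin m → K, e (x, y) = (A x, A y) := by
    intro x y
    have hsplit : e (x, y) = e (x, 0) + e (0, y) := by
      rw [← map_add]; norm_num
    have hx : e (x, (0 : Fin m → K)) = (A x, 0) := by
      rw [Prod.ext_iff]; exact ⟨(hAx x).symm, hsnd0 x⟩
    have hy : e ((0 : Fin m → K), y) = (0, A y) := by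
      rw [Prod.ext_iff]; exact ⟨hfst0 y, hBA y⟩
    rw [hsplit, hx, hy, Prod.mk_add_mk, add_zero, zero_add]
  -- A is idempotent
  have hAA : ∀ x, A (A x) = A x := by
    intro x
    have h := heidem (x, 0)
    rw [heval x 0, heval (A x) (A 0)] at h
    exact (Prod.ext_iff.mp h).1
  -- A commutes with J
  have hAJ : ∀ y, A (J y) = J (A y) := by
    intro y
    have h40 : f4 (-(J y), y) = 0 := by rw [h4]; simp
    have hk := hker f4 U4 W4 hc4 hu4 hw4 (-(J y), y) h40
    rw [h4, heval (-(J y)) y] at hk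
    simp only [LinearMap.add_apply, LinearMap.fst_apply, LinearMap.snd_apply,
      LinearMap.coe_comp, Function.comp_apply] at hk
    rw [map_neg, neg_add_eq_zero] at hk
    exact hk
  -- the scalar c
  have hAe0J : J (A e0) = 0 := by rw [← hAJ, hJe0, map_zero]
  have hAe0 : A e0 = A e0 i0 • e0 := hkerJ (A e0) hAe0J
  set c : K := A e0 i0 with hcdef
  have hcc : c * c = c := by
    have h := hAA e0
    rw [hAe0, map_smul, hAe0] at h
    have h0 := congrFun h i0
    simp only [Pi.smul_apply, he0, Pi.single_eq_same, smul_eq_mul, mul_one] at h0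
    simpa using h0
  -- the nilpotent part N
  set N : (Fin m → K) →ₗ[K] (Fin m → K) := A - c • LinearMap.id with hN
  have hNapp : ∀ z, N z = A z - c • z := fun z => rfl
  have hNe0 : N e0 = 0 := by rw [hNapp, hAe0, sub_self]
  have hNJ : ∀ z, N (J z) = J (N z) := by
    intro z; rw [hNapp, hNapp, map_sub, hAJ, map_smul]
  have hNker : ∀ z, J z = 0 → N z = 0 := by
    intro z hz
    rw [hkerJ z hz, map_smul, hNe0, smul_zero]
  have hQ : ∀ (M : (Fin m → K) →ₗ[K] (Fin m → K)), (∀ z, M (J z) = J (M z)) →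
      (∀ z, J z = 0 → M z = 0) → ∀ (k : ℕ) (z : Fin m → K), (J ^ k) z = 0 → (M ^ k) z = 0 := by
    intro M hMJ hMker
    have hMJk : ∀ (k : ℕ) (z : Fin m → K), M ((J ^ k) z) = (J ^ k) (M z) := by
      intro k
      induction k with
      | zero => intro z; simp
      | succ k ih =>
        intro z
        rw [pow_succ', Module.End.mul_apply, Module.End.mul_apply, hMJ, ih]
    intro k
    induction k with
    | zero => intro z hz; simpa using hz
    | succ k ih =>
      intro z hz
      rw [pow_succ, Module.End.mul_apply]
      apply ih
      rw [← hMJk]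
      apply hMker
      rw [← Module.End.mul_apply, ← pow_succ']
      exact hz
  have hNm : ∀ z, (N ^ m) z = 0 := fun z => hQ N hNJ hNker m z (hJm z)
  -- an idempotent nilpotent endomorphism vanishes
  have hzero : ∀ (B : (Fin m → K) →ₗ[K] (Fin m → K)), (∀ x, B (B x) = B x) →
      (∀ x, (B ^ m) x = 0) → ∀ x, B x = 0 := by
    intro B hB hBn x
    have hp : ∀ (k : ℕ) (x : Fin m → K), (B ^ (k + 1)) x = B x := by
      intro k
      induction k with
      | zero => intro x; rw [pow_one]
      | succ k ih =>
        intro x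
        rw [pow_succ, Module.End.mul_apply, ih, hB]
    obtain ⟨k, hk⟩ : ∃ k, m = k + 1 := ⟨m - 1, by omega⟩
    rw [← hp k x, ← hk]
    exact hBn x
  -- surjectivity of the four maps
  have hr1 : LinearMap.range f1 = ⊤ := by
    rw [h1]; exact LinearMap.range_eq_top.mpr (fun x => ⟨(x, 0), rfl⟩)
  have hr2 : LinearMap.range f2 = ⊤ := by
    rw [h2]; exact LinearMap.range_eq_top.mpr (fun x => ⟨(0, x), rfl⟩)
  have hr3 : LinearMap.range f3 = ⊤ := by
    rw [h3]; exact LinearMap.range_eq_top.mpr (fun x => ⟨(x, 0), by simp⟩)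
  have hr4 : LinearMap.range f4 = ⊤ := by
    rw [h4]; exact LinearMap.range_eq_top.mpr (fun x => ⟨(x, 0), by simp⟩)
  have houter : ∀ (U W : Submodule K (Fin m → K))
      (f : ((Fin m → K) × (Fin m → K)) →ₗ[K] (Fin m → K)),
      IsCompl U W → LinearMap.range f = ⊤ → Submodule.map f ⊤ ≤ W → U = ⊥ := by
    intro U W f hUW hf hle
    have hW : W = ⊤ := top_le_iff.mp (by rwa [Submodule.map_top, hf] at hle)
    have hd := hUW.disjoint
    rw [hW] at hd
    exact disjoint_top.mp hd
  -- case split on c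
  have hc01 : c = 0 ∨ c = 1 := by
    have hd : c * (c - 1) = 0 := by rw [mul_sub, mul_one, hcc, sub_self]
    rcases mul_eq_zero.mp hd with h | h
    · exact Or.inl h
    · exact Or.inr (sub_eq_zero.mp h)
  rcases hc01 with h0 | h1
  · -- c = 0 : e = 0, Uc = ⊥
    have hNA : N = A := by rw [hN, h0, zero_smul, sub_zero]
    have hA0 : ∀ x, A x = 0 := hzero A hAA (fun x => by rw [← hNA]; exact hNm x)
    have he0' : ∀ v : (Fin m → K) × (Fin m → K), e v = 0 := by
      intro v
      have h' : e v = (A v.1, A v.2) := heval v.1 v.2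
      rw [h', hA0, hA0]
      rfl
    have hUcbot : Uc = ⊥ := by
      rw [Submodule.eq_bot_iff]
      intro v hv
      rw [← heUfix v hv, he0' v]
    have hWctop : Wc = ⊤ := by
      have h' := codisjoint_iff.mp hc.codisjoint
      rw [hUcbot, bot_sup_eq] at h'
      exact h'
    exact Or.inl ⟨hUcbot,
      houter U1 W1 f1 hc1 hr1 (hWctop ▸ hw1),
      houter U2 W2 f2 hc2 hr2 (hWctop ▸ hw2),
      houter U3 W3 f3 hc3 hr3 (hWctop ▸ hw3),
      houter U4 W4 f4 hc4 hr4 (hWctop ▸ hw4)⟩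
  · -- c = 1 : e = id, Wc = ⊥
    set B : (Fin m → K) →ₗ[K] (Fin m → K) := LinearMap.id - A with hB
    have hBapp : ∀ z, B z = z - A z := fun z => rfl
    have hBB : ∀ x, B (B x) = B x := by
      intro x
      rw [hBapp, hBapp]
      simp only [map_sub, hAA, sub_self, sub_zero]
    have hBN : B = -N := by
      apply LinearMap.ext
      intro z
      rw [hBapp, LinearMap.neg_apply, hNapp, h1, one_smul, neg_sub]
    have hBJ : ∀ z, B (J z) = J (B z) := by
      intro z
      rw [hBN, LinearMap.neg_apply, LinearMap.neg_apply, hNJ, map_neg]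
    have hBker : ∀ z, J z = 0 → B z = 0 := by
      intro z hz
      rw [hBN, LinearMap.neg_apply, hNker z hz, neg_zero]
    have hBm : ∀ x, (B ^ m) x = 0 := fun x => hQ B hBJ hBker m x (hJm x)
    have hA1 : ∀ x, A x = x := by
      intro x
      have h' := hzero B hBB hBm x
      rw [hBapp] at h'
      exact (sub_eq_zero.mp h').symm
    have he1 : ∀ v : (Fin m → K) × (Fin m → K), e v = v := by
      intro v
      have h' : e v = (A v.1, A v.2) := heval v.1 v.2
      rw [h', hA1, hA1]
    have hWcbot : Wc = ⊥ := by
      rw [Submodule.eq_bot_iff]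
      intro v hv
      rw [← he1 v]
      exact heWzero v hv
    have hUctop : Uc = ⊤ := by
      have h' := codisjoint_iff.mp hc.codisjoint
      rw [hWcbot, sup_bot_eq] at h'
      exact h'
    exact Or.inr ⟨hWcbot,
      houter W1 U1 f1 hc1.symm hr1 (hUctop ▸ hu1),
      houter W2 U2 f2 hc2.symm hr2 (hUctop ▸ hu2),
      houter W3 U3 f3 hc3.symm hr3 (hUctop ▸ hu3),
      houter W4 U4 f4 hc4.symm hr4 (hUctop ▸ hu4)⟩
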